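/- The real numbers μ(1) and λ(1) = (μ(1))² are algebraic over ℚ. -/

import Mathlib

/-- The function `z r x` from Morikawa's problem, with `Real.sqrt` extended by `0`
on negative inputs. -/
noncomputable def z (r x : ℝ) : ℝ :=
  Real.sqrt (x ^ 2 +
    (r - x - Real.sqrt (r ^ 2 -
      (2 * Real.sqrt r - x - Real.sqrt (2 * x - x ^ 2)) ^ 2)) ^ 2)

/-- The Morikawa function `μ(r) = inf { z_r(x) : x ∈ [1 − 1/√2, 1] }`. -/
noncomputable def mu (r : ℝ) : ℝ :=
  sInf (z r '' Set.Icc (1 - 1 / Real.sqrt 2) 1)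

/-- The auxiliary function `λ(k) = (μ(k²))²`. -/
noncomputable def lam (k : ℝ) : ℝ := (mu (k ^ 2)) ^ 2

lemma sqrt_alg {c : ℝ} (hc : IsAlgebraic ℚ c) : IsAlgebraic ℚ (Real.sqrt c) := by
  rcases le_or_gt 0 c with h | h
  · rw [isAlgebraic_iff_isIntegral] at hc ⊢
    refine IsIntegral.of_pow (n := 2) two_pos ?_
    rwa [Real.sq_sqrt h]
  · rw [Real.sqrt_eq_zero'.mpr h.le]
    exact isAlgebraic_zero

lemma alg_add {a b : ℝ} (ha : IsAlgebraic ℚ a) (hb : IsAlgebraic ℚ b) : IsAlgebraic ℚ (a + b) := by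
  rw [isAlgebraic_iff_isIntegral] at *; exact ha.add hb

lemma alg_mul {a b : ℝ} (ha : IsAlgebraic ℚ a) (hb : IsAlgebraic ℚ b) : IsAlgebraic ℚ (a * b) := by
  rw [isAlgebraic_iff_isIntegral] at *; exact ha.mul hb

lemma alg_sub {a b : ℝ} (ha : IsAlgebraic ℚ a) (hb : IsAlgebraic ℚ b) : IsAlgebraic ℚ (a - b) := by
  rw [isAlgebraic_iff_isIntegral] at *; exact ha.sub hb

lemma alg_rat (a : ℚ) : IsAlgebraic ℚ (a : ℝ) := by
  simpa using isAlgebraic_algebraMap (A := ℝ) a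

lemma alg_ofNat (n : ℕ) [n.AtLeastTwo] : IsAlgebraic ℚ (OfNat.ofNat n : ℝ) := by
  simpa using alg_rat (OfNat.ofNat n)

lemma alg_one : IsAlgebraic ℚ (1 : ℝ) := by simpa using alg_rat 1

/-- z 1 at an algebraic point is algebraic. -/
lemma z_one_alg {x : ℝ} (hx : IsAlgebraic ℚ x) : IsAlgebraic ℚ (z 1 x) := by
  unfold z
  have h2 : IsAlgebraic ℚ (2 : ℝ) := alg_ofNat 2
  have hxx : IsAlgebraic ℚ (x ^ 2) := by rw [sq]; exact alg_mul hx hx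
  have hs : IsAlgebraic ℚ (Real.sqrt (2 * x - x ^ 2)) :=
    sqrt_alg (alg_sub (alg_mul h2 hx) hxx)
  have ht : IsAlgebraic ℚ (2 * Real.sqrt 1 - x - Real.sqrt (2 * x - x ^ 2)) := by
    rw [Real.sqrt_one]
    exact alg_sub (alg_sub (alg_mul h2 alg_one) hx) hs
  have ht2 : IsAlgebraic ℚ ((2 * Real.sqrt 1 - x - Real.sqrt (2 * x - x ^ 2)) ^ 2) := by
    rw [sq]; exact alg_mul ht ht
  have hu : IsAlgebraic ℚ (Real.sqrt ((1:ℝ) ^ 2 - (2 * Real.sqrt 1 - x - Real.sqrt (2 * x - x ^ 2)) ^ 2)) :=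
    sqrt_alg (alg_sub (by rw [one_pow]; exact alg_one) ht2)
  have hw : IsAlgebraic ℚ (1 - x - Real.sqrt ((1:ℝ) ^ 2 - (2 * Real.sqrt 1 - x - Real.sqrt (2 * x - x ^ 2)) ^ 2)) :=
    alg_sub (alg_sub alg_one hx) hu
  exact sqrt_alg (alg_add hxx (by rw [sq]; exact alg_mul hw hw))

set_option maxHeartbeats 2000000 in
lemma mu_one_alg : IsAlgebraic ℚ (mu 1) := by
  set a : ℝ := 1 - 1 / Real.sqrt 2 with ha_def
  have hs2 : Real.sqrt 2 ^ 2 = 2 := Real.sq_sqrt (by norm_num)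
  have hs2pos : (1:ℝ) < Real.sqrt 2 := by nlinarith [Real.sqrt_nonneg 2]
  have ha0 : 0 < a := by
    have h : 1 / Real.sqrt 2 < 1 := by
      rw [div_lt_one (by positivity)]; exact hs2pos
    rw [ha_def]; linarith
  have ha1 : a < 1 := by
    have h : 0 < 1 / Real.sqrt 2 := by positivity
    rw [ha_def]; linarith
  obtain ⟨x, hxmem, hmin⟩ :=
    isCompact_Icc.exists_isMinOn (Set.nonempty_Icc.mpr ha1.le)
      ((by unfold z; fun_prop : Continuous (z 1)).continuousOn)
  have hmu : mu 1 = z 1 x := by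
    refine IsLeast.csInf_eq ⟨⟨x, hxmem, rfl⟩, ?_⟩
    rintro y ⟨w, hw, rfl⟩
    exact hmin hw
  rw [hmu]
  refine z_one_alg ?_
  -- Determine algebraicity of the minimizer x
  rcases eq_or_lt_of_le hxmem.1 with hxa | hxa
  · -- x = a = 1 - 1/sqrt 2
    rw [← hxa, ha_def]
    have h12 : (1:ℝ) / Real.sqrt 2 = Real.sqrt 2 * (1/2 : ℝ) := by
      rw [div_eq_iff (by positivity : (0:ℝ) < Real.sqrt 2).ne']
      nlinarith
    rw [h12]
    have hhalf : IsAlgebraic ℚ ((1:ℝ)/2) := by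
      have : ((1/2:ℚ):ℝ) = (1:ℝ)/2 := by norm_num
      rw [← this]; exact alg_rat _
    exact alg_sub alg_one (alg_mul (sqrt_alg (alg_ofNat 2)) hhalf)
  rcases eq_or_lt_of_le hxmem.2 with hx1 | hx1
  · rw [hx1]; exact alg_one
  -- interior case
  set s : ℝ := Real.sqrt (2*x - x^2) with hs_def
  set t : ℝ := 2 - x - s with ht_def
  set u : ℝ := Real.sqrt (1 - t^2) with hu_def
  have hx0 : 0 < x := lt_trans ha0 hxa
  have hSpos : 0 < 2*x - x^2 := by nlinarith
  have h1eq : s^2 = 2*x - x^2 := Real.sq_sqrt hSpos.le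
  have hs_pos : 0 < s := Real.sqrt_pos.mpr hSpos
  have hinv : (1/Real.sqrt 2)^2 = (1/2 : ℝ) := by
    rw [div_pow, hs2]; norm_num
  have h1x : 1 - x < 1/Real.sqrt 2 := by rw [ha_def] at hxa; linarith
  have ht_lt : t < 1 := by
    have hxle : (0:ℝ) ≤ 1 - x := by linarith
    have : 1 - x < s := by
      rw [hs_def]
      rw [Real.lt_sqrt hxle]
      nlinarith
    rw [ht_def]; linarith
  have ht_nonneg : 0 ≤ t := by
    have : s ≤ 2 - x := by
      rw [hs_def, Real.sqrt_le_left (by linarith)]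
      nlinarith
    rw [ht_def]; linarith
  have hUpos : 0 < 1 - t^2 := by nlinarith
  have h2eq : u^2 = 1 - t^2 := Real.sq_sqrt hUpos.le
  have hu_pos : 0 < u := Real.sqrt_pos.mpr hUpos
  -- the squared objective
  set F : ℝ → ℝ := fun y => y^2 + (1 - y - Real.sqrt (1 - (2 - y - Real.sqrt (2*y - y^2))^2))^2 with hF_def
  have hFz : ∀ y, z 1 y = Real.sqrt (F y) := by
    intro y
    rw [z, hF_def]
    norm_num [Real.sqrt_one]
  have hFnn : ∀ y, 0 ≤ F y := fun y => by rw [hF_def]; positivity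
  have hloc : IsLocalMin F x := by
    have hnb : Set.Icc a 1 ∈ nhds x := Icc_mem_nhds hxa hx1
    refine Filter.eventually_of_mem hnb (fun w hw => ?_)
    have h1 : z 1 x ≤ z 1 w := hmin hw
    rw [hFz x, hFz w] at h1
    nlinarith [Real.sq_sqrt (hFnn x), Real.sq_sqrt (hFnn w), Real.sqrt_nonneg (F x),
      Real.sqrt_nonneg (F w), h1]
  -- derivative computation
  have hds : HasDerivAt (fun y : ℝ => 2*y - y^2) (2 - 2*x) x := by
    have h := ((hasDerivAt_id x).const_mul (2:ℝ)).sub ((hasDerivAt_id x).pow 2)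
    exact h.congr_deriv (by norm_num)
  have hsd : HasDerivAt (fun y : ℝ => Real.sqrt (2*y - y^2)) ((2 - 2*x)/(2*s)) x := by
    have := hds.sqrt (ne_of_gt hSpos)
    simpa [← hs_def] using this
  have htd : HasDerivAt (fun y : ℝ => 2 - y - Real.sqrt (2*y - y^2))
      (0 - 1 - (2 - 2*x)/(2*s)) x := by
    exact ((hasDerivAt_const x (2:ℝ)).sub (hasDerivAt_id x)).sub hsd
  have hUd : HasDerivAt (fun y : ℝ => 1 - (2 - y - Real.sqrt (2*y - y^2))^2)
      (0 - (2 * t * (0 - 1 - (2 - 2*x)/(2*s)))) x := by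
    have h := (hasDerivAt_const x (1:ℝ)).sub (htd.pow 2)
    have h2 : ((2:ℕ):ℝ) * t^(2-1) * (0 - 1 - (2 - 2*x)/(2*s)) = 2 * t * (0 - 1 - (2 - 2*x)/(2*s)) := by
      norm_num
    rw [ht_def] at h2
    exact h.congr_deriv (by rw [ht_def, hs_def]; norm_num)
  have hud : HasDerivAt (fun y : ℝ => Real.sqrt (1 - (2 - y - Real.sqrt (2*y - y^2))^2))
      ((0 - (2 * t * (0 - 1 - (2 - 2*x)/(2*s))))/(2*u)) x := by
    have := hUd.sqrt (by rw [← ht_def]; exact ne_of_gt hUpos)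
    simpa [← ht_def, ← hu_def] using this
  have hwd : HasDerivAt (fun y : ℝ => 1 - y - Real.sqrt (1 - (2 - y - Real.sqrt (2*y - y^2))^2))
      (0 - 1 - (0 - (2 * t * (0 - 1 - (2 - 2*x)/(2*s))))/(2*u)) x :=
    ((hasDerivAt_const x (1:ℝ)).sub (hasDerivAt_id x)).sub hud
  have hFd : HasDerivAt F
      (2*x + 2 * (1 - x - u) * (0 - 1 - (0 - (2 * t * (0 - 1 - (2 - 2*x)/(2*s))))/(2*u))) x := by
    have h := (hasDerivAt_pow 2 x).add (hwd.pow 2)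
    have he : ((2:ℕ):ℝ) * x^(2-1) + ((2:ℕ):ℝ) * (1 - x - u)^(2-1) * (0 - 1 - (0 - (2 * t * (0 - 1 - (2 - 2*x)/(2*s))))/(2*u))
        = 2*x + 2 * (1 - x - u) * (0 - 1 - (0 - (2 * t * (0 - 1 - (2 - 2*x)/(2*s))))/(2*u)) := by
      norm_num
    rw [ht_def, hu_def] at he
    rw [hF_def]
    exact h.congr_deriv (by rw [hu_def, ht_def, hs_def]; norm_num)
  have hcrit := hloc.hasDerivAt_eq_zero hFd
  -- polynomial relation for x
  have h3eq : x*s*u - (1-x-u)*(s*u + (2-x-s)*(s+1-x)) = 0 := by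
    have hs0 : s ≠ 0 := ne_of_gt hs_pos
    have hu0 : u ≠ 0 := ne_of_gt hu_pos
    field_simp at hcrit
    rw [ht_def] at hcrit
    linear_combination hcrit / 2
  have hLeq : (2 - s^2 - 3*x + 2*x*s + x^2)*u
      + (-2 - 4*s + 5*s^2 - s^3 + 5*x + 5*x*s - 3*x*s^2 - 4*x^2 - x^2*s + x^3) = 0 := by
    rw [ht_def] at h2eq
    linear_combination h3eq - s*h2eq
  have hBeq : (-2 - 4*s + 5*s^2 - s^3 + 5*x + 5*x*s - 3*x*s^2 - 4*x^2 - x^2*s + x^3)^2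
      - (2 - s^2 - 3*x + 2*x*s + x^2)^2 * (1 - (2 - x - s)^2) = 0 := by
    rw [ht_def] at h2eq
    linear_combination ((-2 - 4*s + 5*s^2 - s^3 + 5*x + 5*x*s - 3*x*s^2 - 4*x^2 - x^2*s + x^3)
      - (2 - s^2 - 3*x + 2*x*s + x^2)*u) * hLeq
      + (2 - s^2 - 3*x + 2*x*s + x^2)^2 * h2eq
  have hCeq : (-20*x - 38*x^2 + 56*x^3 - 16*x^4)*s
      + (16 - 96*x + 296*x^2 - 302*x^3 + 120*x^4 - 16*x^5) = 0 := by
    linear_combination hBeq - (-12 - 20*s + 32*s^2 - 14*s^3 + 2*s^4 + 76*x - 18*x*s^2 + 4*x*s^3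
      - 50*x^2 - 2*x^2*s + 4*x^2*s^2 + 2*x^3 + 4*x^3*s + 2*x^4) * h1eq
  have hDeq : 256 - 3072*x + 18688*x^2 - 67296*x^3 + 146800*x^4 - 199224*x^5 + 171752*x^6
      - 94272*x^7 + 32000*x^8 - 6144*x^9 + 512*x^10 = 0 := by
    linear_combination ((16 - 96*x + 296*x^2 - 302*x^3 + 120*x^4 - 16*x^5)
      - (-20*x - 38*x^2 + 56*x^3 - 16*x^4)*s) * hCeq
      + (-20*x - 38*x^2 + 56*x^3 - 16*x^4)^2 * h1eq
  -- x is algebraic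
  refine ⟨Polynomial.C 512 * Polynomial.X^10 - Polynomial.C 6144 * Polynomial.X^9
    + Polynomial.C 32000 * Polynomial.X^8 - Polynomial.C 94272 * Polynomial.X^7
    + Polynomial.C 171752 * Polynomial.X^6 - Polynomial.C 199224 * Polynomial.X^5
    + Polynomial.C 146800 * Polynomial.X^4 - Polynomial.C 67296 * Polynomial.X^3
    + Polynomial.C 18688 * Polynomial.X^2 - Polynomial.C 3072 * Polynomial.X
    + Polynomial.C 256, ?_, ?_⟩
  · intro h
    have := congrArg (Polynomial.eval 0) h
    simp at this
  · simp only [map_add, map_sub, map_mul, map_pow, map_ofNat, Polynomial.aeval_C,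
      Polynomial.aeval_X]
    linear_combination hDeq

theorem morikawa_mu_one_algebraic :
    IsAlgebraic ℚ (mu 1) ∧ IsAlgebraic ℚ (lam 1) := by
  refine ⟨mu_one_alg, ?_⟩
  have h : lam 1 = mu 1 * mu 1 := by norm_num [lam, sq]
  rw [h]
  exact alg_mul mu_one_alg mu_one_alg
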